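/- arXiv:2409.00276 — 2 statements merged into one kernel-verified Lean document; each statement's English description precedes it below -/
import Mathlib

section
/- For matrices B ∈ ℝ^{m×N} and C ∈ ℝ^{m×n}, the following are equivalent: (i) there exists G ∈ ℝ^{n×N} whose every column G_{:,t} satisfies ‖G_{:,t}‖₂ ≤ 1 and such that B Gᵀ + C = 0_{m×n}; (ii) for every Z ∈ ℝ^{m×n}, ⟨C, Z⟩ ≤ ‖Zᵀ B‖_{2,1}. -/
open Matrix
open scoped BigOperators Classical

/-- Euclidean norm of a vector in `ℝ^k`. -/
noncomputable def e2norm {k : ℕ} (v : Fin k → ℝ) : ℝ := Real.sqrt (∑ i, (v i) ^ 2)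

lemma e2norm_nonneg {k : ℕ} (v : Fin k → ℝ) : 0 ≤ e2norm v := Real.sqrt_nonneg _

lemma sq_e2norm {k : ℕ} (v : Fin k → ℝ) : e2norm v ^ 2 = ∑ i, v i ^ 2 :=
  Real.sq_sqrt (Finset.sum_nonneg fun _ _ => sq_nonneg _)

lemma e2norm_euclid {k : ℕ} (x : EuclideanSpace ℝ (Fin k)) : ‖x‖ = e2norm (fun i => x i) := by
  rw [EuclideanSpace.norm_eq]; simp [e2norm, sq_abs]

lemma e2norm_smul {k : ℕ} (c : ℝ) (v : Fin k → ℝ) :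
    e2norm (fun i => c * v i) = |c| * e2norm v := by
  simp only [e2norm, mul_pow, ← Finset.mul_sum]
  rw [Real.sqrt_mul (sq_nonneg c), Real.sqrt_sq_eq_abs]

lemma e2norm_neg {k : ℕ} (v : Fin k → ℝ) : e2norm (fun i => -v i) = e2norm v := by
  simp [e2norm]

lemma cauchy_schwarz {k : ℕ} (v w : Fin k → ℝ) :
    ∑ i, v i * w i ≤ e2norm v * e2norm w := by
  have h := real_inner_le_norm ((WithLp.equiv 2 (Fin k → ℝ)).symm v)
    ((WithLp.equiv 2 (Fin k → ℝ)).symm w)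
  simpa [PiLp.inner_apply, e2norm_euclid, RCLike.inner_apply, mul_comm] using h

lemma exists_unit {k : ℕ} (w : Fin k → ℝ) :
    ∃ g : Fin k → ℝ, e2norm g ≤ 1 ∧ ∑ i, g i * w i = e2norm w := by
  by_cases h : e2norm w = 0
  · refine ⟨0, by simp [e2norm], ?_⟩
    have h2 : ∑ i, w i ^ 2 = 0 := by rw [← sq_e2norm, h]; ring
    simp [h, h2]
  · have hpos : 0 < e2norm w := lt_of_le_of_ne (e2norm_nonneg w) (Ne.symm h)
    refine ⟨fun i => (e2norm w)⁻¹ * w i, ?_, ?_⟩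
    · rw [e2norm_smul, abs_of_nonneg (inv_nonneg.2 hpos.le), inv_mul_cancel₀ h]
    · have : ∑ i, (e2norm w)⁻¹ * w i * w i = (e2norm w)⁻¹ * ∑ i, w i ^ 2 := by
        rw [Finset.mul_sum]; congr 1; ext i; ring
      rw [this, ← sq_e2norm]
      field_simp

lemma triple_swap {α β γ : Type*} [Fintype α] [Fintype β] [Fintype γ]
    (f : α → β → γ → ℝ) :
    ∑ i, ∑ j, ∑ t, f i j t = ∑ t, ∑ j, ∑ i, f i j t :=
  calc ∑ i, ∑ j, ∑ t, f i j t = ∑ j, ∑ i, ∑ t, f i j t := Finset.sum_comm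
    _ = ∑ j, ∑ t, ∑ i, f i j t := Finset.sum_congr rfl fun _ _ => Finset.sum_comm
    _ = ∑ t, ∑ j, ∑ i, f i j t := Finset.sum_comm

noncomputable def Lmap (m n N : ℕ) (B : Matrix (Fin m) (Fin N) ℝ) :
    (Fin N → EuclideanSpace ℝ (Fin n)) →ₗ[ℝ] EuclideanSpace ℝ (Fin m × Fin n) where
  toFun g := (WithLp.equiv 2 (Fin m × Fin n → ℝ)).symm (fun p => ∑ t, B p.1 t * g t p.2)
  map_add' g g' := by
    ext p
    simp [mul_add, Finset.sum_add_distrib]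
  map_smul' c g := by
    ext p
    simp [Finset.mul_sum]
    ring_nf
    simp [mul_comm, mul_assoc, mul_left_comm]

/-- generalized Farkas step. For `B ∈ ℝ^{m×N}` and `C ∈ ℝ^{m×n}`:
there exists `G ∈ ℝ^{n×N}` with all columns of `ℓ₂`-norm at most `1` such that
`B Gᵀ + C = 0` iff for every `Z ∈ ℝ^{m×n}`, `⟨C, Z⟩ ≤ ‖Zᵀ B‖_{2,1}`. -/
theorem farkas_step (m n N : ℕ)
    (B : Matrix (Fin m) (Fin N) ℝ) (C : Matrix (Fin m) (Fin n) ℝ) :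
    (∃ G : Matrix (Fin n) (Fin N) ℝ,
        (∀ t : Fin N, e2norm (fun i => G i t) ≤ 1) ∧ B * Gᵀ + C = 0)
      ↔
    (∀ Z : Matrix (Fin m) (Fin n) ℝ,
        (∑ i, ∑ j, C i j * Z i j) ≤ ∑ t : Fin N, e2norm (fun i => (Zᵀ * B) i t)) := by
  constructor
  · rintro ⟨G, hG, hBG⟩ Z
    have hC : C = -(B * Gᵀ) := eq_neg_of_add_eq_zero_right hBG
    have key : (∑ i, ∑ j, C i j * Z i j)
        = ∑ t, ∑ j, (-(G j t)) * ((Zᵀ * B) j t) := by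
      have h1 : (∑ i, ∑ j, C i j * Z i j)
          = ∑ i, ∑ j, ∑ t, -(B i t * G j t * Z i j) := by
        refine Finset.sum_congr rfl fun i _ => Finset.sum_congr rfl fun j _ => ?_
        rw [hC]
        simp only [Matrix.neg_apply, Matrix.mul_apply, Matrix.transpose_apply,
          neg_mul, Finset.sum_mul, Finset.sum_neg_distrib]
      rw [h1, triple_swap]
      refine Finset.sum_congr rfl fun t _ => Finset.sum_congr rfl fun j _ => ?_
      rw [Matrix.mul_apply]
      simp only [Matrix.transpose_apply, neg_mul, Finset.mul_sum, Finset.sum_neg_distrib]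
      refine congrArg Neg.neg (Finset.sum_congr rfl fun i _ => by ring)
    rw [key]
    refine Finset.sum_le_sum fun t _ => ?_
    calc ∑ j, (-(G j t)) * ((Zᵀ * B) j t)
        ≤ e2norm (fun j => -(G j t)) * e2norm (fun j => (Zᵀ * B) j t) :=
          cauchy_schwarz _ _
      _ = e2norm (fun j => G j t) * e2norm (fun j => (Zᵀ * B) j t) := by
          rw [e2norm_neg]
      _ ≤ 1 * e2norm (fun j => (Zᵀ * B) j t) := by
          exact mul_le_mul_of_nonneg_right (hG t) (e2norm_nonneg _)
      _ = e2norm (fun j => (Zᵀ * B) j t) := one_mul _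
  · intro hZ
    by_contra hno
    set Ω : Set (Fin N → EuclideanSpace ℝ (Fin n)) :=
      Set.univ.pi fun _ : Fin N => Metric.closedBall (0 : EuclideanSpace ℝ (Fin n)) 1 with hΩ
    set K : Set (EuclideanSpace ℝ (Fin m × Fin n)) := (Lmap m n N B) '' Ω with hK
    set φC : EuclideanSpace ℝ (Fin m × Fin n) :=
      (WithLp.equiv 2 (Fin m × Fin n → ℝ)).symm (fun p => C p.1 p.2) with hφC
    have hconv : Convex ℝ K :=
      (convex_pi fun _ _ => convex_closedBall _ _).linear_image _
    have hcomp : IsCompact K :=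
      (isCompact_univ_pi fun _ => isCompact_closedBall _ _).image
        (LinearMap.continuous_of_finiteDimensional _)
    have hCK : φC ∉ K := by
      rintro ⟨g, hg, hLg⟩
      apply hno
      refine ⟨Matrix.of (fun i t => -(g t i)), ?_, ?_⟩
      · intro t
        have ht : g t ∈ Metric.closedBall (0 : EuclideanSpace ℝ (Fin n)) 1 :=
          hg t (Set.mem_univ t)
        rw [Metric.mem_closedBall, dist_zero_right, e2norm_euclid] at ht
        simpa [e2norm_neg] using ht
      · have h2 : ∀ p : Fin m × Fin n, (Lmap m n N B g) p = φC p := fun p => by rw [hLg]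
        simp only [Lmap, LinearMap.coe_mk, AddHom.coe_mk, hφC,
          WithLp.equiv_symm_apply, PiLp.toLp_apply] at h2
        ext i j
        have := h2 (i, j)
        simp only [Matrix.add_apply, Matrix.mul_apply, Matrix.transpose_apply,
          Matrix.of_apply, Matrix.zero_apply, mul_neg]
        rw [Finset.sum_neg_distrib, this]
        ring
    obtain ⟨f, u, hfa, hfx⟩ := geometric_hahn_banach_closed_point hconv hcomp.isClosed hCK
    set y := (InnerProductSpace.toDual ℝ (EuclideanSpace ℝ (Fin m × Fin n))).symm f with hy
    have hfy : ∀ x, f x = ∑ p : Fin m × Fin n, y p * x p := by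
      intro x
      rw [← InnerProductSpace.toDual_symm_apply (y := (f : StrongDual ℝ _)) (x := x)]
      rw [PiLp.inner_apply]
      simp [RCLike.inner_apply, starRingEnd_apply, ← hy, mul_comm]
    set Z : Matrix (Fin m) (Fin n) ℝ := Matrix.of (fun i j => y (i, j)) with hZdef
    -- choose optimal g
    choose g0 hg0n hg0s using fun t : Fin N => exists_unit (fun j => (Zᵀ * B) j t)
    set g : Fin N → EuclideanSpace ℝ (Fin n) :=
      fun t => (WithLp.equiv 2 (Fin n → ℝ)).symm (g0 t) with hgdef
    have hgmem : g ∈ Ω := by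
      intro t _
      rw [Metric.mem_closedBall, dist_zero_right, e2norm_euclid]
      simpa [hgdef, WithLp.equiv_symm_apply] using hg0n t
    have hfLg : f (Lmap m n N B g) = ∑ t, e2norm (fun j => (Zᵀ * B) j t) := by
      rw [hfy]
      have : ∑ p : Fin m × Fin n, y p * (Lmap m n N B g) p
          = ∑ i, ∑ j, ∑ t, y (i, j) * (B i t * g0 t j) := by
        rw [Fintype.sum_prod_type]
        refine Finset.sum_congr rfl fun i _ => Finset.sum_congr rfl fun j _ => ?_
        simp only [Lmap, LinearMap.coe_mk, AddHom.coe_mk, WithLp.equiv_symm_apply, PiLp.toLp_apply]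
        rw [Finset.mul_sum]
        rfl
      rw [this, triple_swap]
      refine Finset.sum_congr rfl fun t _ => ?_
      rw [← hg0s t]
      refine Finset.sum_congr rfl fun j _ => ?_
      rw [Matrix.mul_apply, Finset.mul_sum]
      refine Finset.sum_congr rfl fun i _ => ?_
      simp only [Matrix.transpose_apply, hZdef, Matrix.of_apply]
      ring
    have hfC : f φC = ∑ i, ∑ j, C i j * Z i j := by
      rw [hfy, Fintype.sum_prod_type]
      refine Finset.sum_congr rfl fun i _ => Finset.sum_congr rfl fun j _ => ?_
      simp only [hφC, WithLp.equiv_symm_apply, PiLp.toLp_apply, hZdef, Matrix.of_apply]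
      ring
    have h1 : f (Lmap m n N B g) < u := hfa _ ⟨g, hgmem, rfl⟩
    have h2 : u < f φC := hfx
    have h3 : f φC ≤ f (Lmap m n N B g) := by
      rw [hfC, hfLg]; exact hZ Z
    linarith
end

section
/- Suppose the basis dimension is m = 1, so f : ℝⁿ → ℝ and f(x_t) ∈ ℝ for each t. Then the ground-truth matrix Ā ∈ ℝ^{n×1} is a global minimizer over A ∈ ℝ^{n×1} of the loss g(A) = Σ_{t=0}^{T−1} ‖(Ā − A) f(x_t) + d̄_t‖₂ if and only if ‖Σ_{t∈K} f(x_t) d̂_t‖₂ ≤ Σ_{t∈K^c} |f(x_t)|. -/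
open Matrix
open scoped BigOperators Classical

/-- Normalized attack direction `d̂ = d / ‖d‖₂`. -/
noncomputable def dhat {k : ℕ} (v : Fin k → ℝ) : Fin k → ℝ := (e2norm v)⁻¹ • v

section Aux
open RealInnerProductSpace
variable {E : Type*} [NormedAddCommGroup E] [InnerProductSpace ℝ E]

lemma norm_add_le_aux (d w : E) (hd : d ≠ 0) :
    ‖d + w‖ ≤ ‖d‖ + ‖d‖⁻¹ * (⟪w, d⟫ + ‖w‖ ^ 2) := by
  have ha : (0:ℝ) < ‖d‖ := norm_pos_iff.mpr hd
  have h1 : ‖d + w‖ ^ 2 = ‖d‖ ^ 2 + 2 * ⟪d, w⟫ + ‖w‖ ^ 2 := norm_add_sq_real d w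
  have h2 : |(⟪d, w⟫ : ℝ)| ≤ ‖d‖ * ‖w‖ := abs_real_inner_le_norm d w
  have hsym : (⟪w, d⟫ : ℝ) = ⟪d, w⟫ := (real_inner_comm d w)
  have hx : (0:ℝ) ≤ ‖d + w‖ := norm_nonneg _
  have h2' := abs_le.mp h2
  have key : ‖d‖ * ‖d + w‖ ≤ ‖d‖ ^ 2 + ⟪d, w⟫ + ‖w‖ ^ 2 := by
    nlinarith [sq_nonneg (⟪d, w⟫ + ‖w‖ ^ 2), sq_nonneg (‖d‖ - ‖w‖), sq_nonneg (‖d‖ * ‖w‖),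
      mul_nonneg hx (norm_nonneg w), sq_nonneg ‖w‖]
  rw [hsym, ← sub_nonneg]
  have heq : ‖d‖ + ‖d‖⁻¹ * (⟪d, w⟫ + ‖w‖ ^ 2) - ‖d + w‖
      = ‖d‖⁻¹ * (‖d‖ ^ 2 + ⟪d, w⟫ + ‖w‖ ^ 2 - ‖d‖ * ‖d + w‖) := by
    field_simp; ring
  rw [heq]
  exact mul_nonneg (by positivity) (by linarith)

lemma abstract_min_iff (T : ℕ) (c : ℕ → ℝ) (d : ℕ → E) :
    (∀ b : E, ∑ t ∈ Finset.range T, ‖d t‖ ≤ ∑ t ∈ Finset.range T, ‖c t • b + d t‖) ↔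
    ‖∑ t ∈ (Finset.range T).filter (fun t => d t ≠ 0), c t • (‖d t‖⁻¹ • d t)‖ ≤
      ∑ t ∈ (Finset.range T).filter (fun t => d t = 0), |c t| := by
  set K := (Finset.range T).filter (fun t => d t ≠ 0) with hK
  set Kc := (Finset.range T).filter (fun t => d t = 0) with hKc
  set s : E := ∑ t ∈ K, c t • (‖d t‖⁻¹ • d t) with hs
  set C : ℝ := ∑ t ∈ Kc, |c t| with hC
  have hC0 : 0 ≤ C := Finset.sum_nonneg fun t _ => abs_nonneg _
  have hsplit : ∀ g : ℕ → ℝ, ∑ t ∈ Finset.range T, g t = ∑ t ∈ K, g t + ∑ t ∈ Kc, g t := by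
    intro g
    rw [hK, hKc, ← Finset.sum_filter_add_sum_filter_not (Finset.range T) (fun t => d t ≠ 0) g]
    congr 1
    apply Finset.sum_congr _ (fun _ _ => rfl)
    apply Finset.filter_congr
    intro t _; simp
  have hdK : ∀ t ∈ K, d t ≠ 0 := fun t ht => (Finset.mem_filter.mp ht).2
  have hdKc : ∀ t ∈ Kc, d t = 0 := fun t ht => (Finset.mem_filter.mp ht).2
  have hinner : ∀ b : E, ⟪b, s⟫ = ∑ t ∈ K, c t * (‖d t‖⁻¹ * ⟪b, d t⟫) := by
    intro b
    rw [hs, inner_sum]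
    exact Finset.sum_congr rfl fun t _ => by rw [real_inner_smul_right, real_inner_smul_right]
  have hdnorm : ∑ t ∈ Finset.range T, ‖d t‖ = ∑ t ∈ K, ‖d t‖ := by
    rw [hsplit (fun t => ‖d t‖)]
    have : ∑ t ∈ Kc, ‖d t‖ = 0 := Finset.sum_eq_zero fun t ht => by rw [hdKc t ht, norm_zero]
    rw [this, add_zero]
  constructor
  · intro h
    by_contra hlt
    push_neg at hlt
    have hs0 : 0 < ‖s‖ := lt_of_le_of_lt hC0 hlt
    set M : ℝ := ∑ t ∈ K, (c t) ^ 2 * ‖s‖ ^ 2 * ‖d t‖⁻¹ with hM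
    have hM0 : 0 ≤ M := Finset.sum_nonneg fun t ht => by positivity
    set ε : ℝ := ‖s‖ * (‖s‖ - C) / (M + 1) with hε
    have hε0 : 0 < ε := div_pos (mul_pos hs0 (by linarith)) (by linarith)
    have hb := h (-(ε • s))
    have hub : ∑ t ∈ Finset.range T, ‖c t • -(ε • s) + d t‖ ≤
        ∑ t ∈ K, ‖d t‖ - ε * ‖s‖ ^ 2 + ε ^ 2 * M + ε * C * ‖s‖ := by
      rw [hsplit (fun t => ‖c t • -(ε • s) + d t‖)]
      have h1 : ∑ t ∈ K, ‖c t • -(ε • s) + d t‖ ≤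
          ∑ t ∈ K, (‖d t‖ - ε * (c t * (‖d t‖⁻¹ * ⟪s, d t⟫))
            + ε ^ 2 * ((c t) ^ 2 * ‖s‖ ^ 2 * ‖d t‖⁻¹)) := by
        apply Finset.sum_le_sum
        intro t ht
        have hd := hdK t ht
        have hle := norm_add_le_aux (d t) (c t • -(ε • s)) hd
        rw [add_comm]
        refine le_trans hle (le_of_eq ?_)
        have hi : ⟪c t • -(ε • s), d t⟫ = -(ε * (c t * ⟪s, d t⟫)) := by
          rw [real_inner_smul_left, inner_neg_left, real_inner_smul_left]; ring
        have hn : ‖c t • -(ε • s)‖ ^ 2 = (c t) ^ 2 * (ε ^ 2 * ‖s‖ ^ 2) := by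
          rw [norm_smul, norm_neg, norm_smul, Real.norm_eq_abs, Real.norm_eq_abs,
            mul_pow, mul_pow, sq_abs, sq_abs]
        rw [hi, hn]; ring
      have h2 : ∑ t ∈ Kc, ‖c t • -(ε • s) + d t‖ = ∑ t ∈ Kc, |c t| * (ε * ‖s‖) := by
        apply Finset.sum_congr rfl
        intro t ht
        rw [hdKc t ht, add_zero, norm_smul, norm_neg, norm_smul,
          Real.norm_eq_abs, Real.norm_eq_abs, abs_of_pos hε0]
      rw [h2]
      have h3 : ∑ t ∈ Kc, |c t| * (ε * ‖s‖) = ε * C * ‖s‖ := by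
        rw [← Finset.sum_mul]; ring
      rw [h3]
      have h4 : ∑ t ∈ K, (‖d t‖ - ε * (c t * (‖d t‖⁻¹ * ⟪s, d t⟫))
            + ε ^ 2 * ((c t) ^ 2 * ‖s‖ ^ 2 * ‖d t‖⁻¹))
          = ∑ t ∈ K, ‖d t‖ - ε * ⟪s, s⟫ + ε ^ 2 * M := by
        rw [Finset.sum_add_distrib, Finset.sum_sub_distrib, ← Finset.mul_sum, ← hinner s, hM,
          ← Finset.mul_sum]
      rw [h4] at h1
      have h5 : ⟪s, s⟫ = ‖s‖ ^ 2 := real_inner_self_eq_norm_sq s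
      rw [h5] at h1
      linarith
    rw [hdnorm] at hb
    have hfinal : 0 < ε * ‖s‖ ^ 2 - ε ^ 2 * M - ε * C * ‖s‖ := by
      have h6 : ε * M < ‖s‖ * (‖s‖ - C) := by
        rw [hε, div_mul_eq_mul_div, div_lt_iff₀ (by linarith : (0:ℝ) < M + 1)]
        have hpos : 0 < ‖s‖ * (‖s‖ - C) := mul_pos hs0 (by linarith)
        nlinarith
      nlinarith
    linarith [le_trans hb hub]
  · intro h b
    have hlb : ∑ t ∈ K, (‖d t‖ + c t * (‖d t‖⁻¹ * ⟪b, d t⟫)) + ∑ t ∈ Kc, |c t| * ‖b‖ ≤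
        ∑ t ∈ Finset.range T, ‖c t • b + d t‖ := by
      rw [hsplit (fun t => ‖c t • b + d t‖)]
      apply add_le_add
      · apply Finset.sum_le_sum
        intro t ht
        have hd := hdK t ht
        have hd0 : (0:ℝ) < ‖d t‖ := norm_pos_iff.mpr hd
        have hu : ‖(‖d t‖⁻¹ • d t)‖ = 1 := by
          rw [norm_smul, Real.norm_eq_abs, abs_of_pos (inv_pos.mpr hd0), inv_mul_cancel₀ hd0.ne']
        have hle := real_inner_le_norm (c t • b + d t) (‖d t‖⁻¹ • d t)
        rw [hu, mul_one] at hle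
        refine le_trans (le_of_eq ?_) hle
        rw [inner_add_left, real_inner_smul_left, real_inner_smul_right,
          real_inner_smul_right, real_inner_self_eq_norm_sq]
        have hq : ‖d t‖⁻¹ * ‖d t‖ ^ 2 = ‖d t‖ := by field_simp
        rw [hq]; ring
      · apply Finset.sum_le_sum
        intro t ht
        rw [hdKc t ht, add_zero, norm_smul, Real.norm_eq_abs]
    have hinner2 : ∑ t ∈ K, c t * (‖d t‖⁻¹ * ⟪b, d t⟫) = ⟪b, s⟫ := (hinner b).symm
    have hcs : -(‖b‖ * ‖s‖) ≤ ⟪b, s⟫ := (abs_le.mp (abs_real_inner_le_norm b s)).1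
    have hns : ‖s‖ * ‖b‖ ≤ C * ‖b‖ := mul_le_mul_of_nonneg_right h (norm_nonneg b)
    rw [hdnorm]
    have e1 : ∑ t ∈ K, (‖d t‖ + c t * (‖d t‖⁻¹ * ⟪b, d t⟫)) = ∑ t ∈ K, ‖d t‖ + ⟪b, s⟫ := by
      rw [Finset.sum_add_distrib, hinner2]
    have e2 : ∑ t ∈ Kc, |c t| * ‖b‖ = C * ‖b‖ := by rw [← Finset.sum_mul]
    rw [e1, e2] at hlb
    nlinarith [hlb, hcs, hns]

end Aux

lemma e2norm_eq {k : ℕ} (v : Fin k → ℝ) :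
    e2norm v = ‖(WithLp.equiv 2 (Fin k → ℝ)).symm v‖ := by
  rw [EuclideanSpace.norm_eq]
  simp [e2norm, Real.norm_eq_abs, sq_abs]

/-- Corollary 2.3 for basis dimension `m = 1`.
With `f : ℝⁿ → ℝ`, `Ā ∈ ℝ^{n×1}` is a global minimizer of
`g(A) = Σ_{t<T} ‖(Ā − A) f(x_t) + d̄_t‖₂` iff
`‖Σ_{t∈K} f(x_t) d̂_t‖₂ ≤ Σ_{t∈K^c} |f(x_t)|`. -/
theorem groundTruth_isGlobalMin_iff_one_dim
    (T n : ℕ) (hT : 0 < T) (hn : 0 < n)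
    (f : (Fin n → ℝ) → ℝ)
    (Abar : Matrix (Fin n) (Fin 1) ℝ)
    (d : ℕ → (Fin n → ℝ)) (x : ℕ → (Fin n → ℝ))
    (hx0 : x 0 = 0)
    (hxstep : ∀ t < T, x (t + 1) = Abar.mulVec (fun _ => f (x t)) + d t) :
    (∀ A : Matrix (Fin n) (Fin 1) ℝ,
        ∑ t ∈ Finset.range T, e2norm ((Abar - Abar).mulVec (fun _ => f (x t)) + d t) ≤
          ∑ t ∈ Finset.range T, e2norm ((Abar - A).mulVec (fun _ => f (x t)) + d t))
      ↔
    e2norm (∑ t ∈ (Finset.range T).filter (fun t => d t ≠ 0), f (x t) • dhat (d t)) ≤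
      ∑ t ∈ (Finset.range T).filter (fun t => d t = 0), |f (x t)| := by
  classical
  set ι := (WithLp.equiv 2 (Fin n → ℝ)).symm with hι
  have key := abstract_min_iff (E := EuclideanSpace ℝ (Fin n)) T (fun t => f (x t))
      (fun t => ι (d t))
  have hterm : ∀ (A : Matrix (Fin n) (Fin 1) ℝ) (t : ℕ),
      e2norm ((Abar - A).mulVec (fun _ => f (x t)) + d t)
        = ‖f (x t) • ι (fun i => Abar i 0 - A i 0) + ι (d t)‖ := by
    intro A t
    have hmv : (Abar - A).mulVec (fun _ => f (x t))
        = f (x t) • (fun i => Abar i 0 - A i 0) := by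
      funext i
      simp [Matrix.mulVec, dotProduct, Matrix.sub_apply, mul_comm]
    rw [hmv, e2norm_eq]
    rfl
  have hterm0 : ∀ t : ℕ,
      e2norm ((Abar - Abar).mulVec (fun _ => f (x t)) + d t) = ‖ι (d t)‖ := by
    intro t
    rw [sub_self, Matrix.zero_mulVec, zero_add, e2norm_eq]
  have hL : (∀ A : Matrix (Fin n) (Fin 1) ℝ,
        ∑ t ∈ Finset.range T, e2norm ((Abar - Abar).mulVec (fun _ => f (x t)) + d t) ≤
          ∑ t ∈ Finset.range T, e2norm ((Abar - A).mulVec (fun _ => f (x t)) + d t))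
      ↔ (∀ b : EuclideanSpace ℝ (Fin n),
          ∑ t ∈ Finset.range T, ‖ι (d t)‖ ≤
            ∑ t ∈ Finset.range T, ‖f (x t) • b + ι (d t)‖) := by
    constructor
    · intro h b
      have h2 := h (fun i _ => Abar i 0 - b i)
      simp only [hterm0, hterm (fun i _ => Abar i 0 - b i)] at h2
      have hb : ι (fun i => Abar i 0 - (fun i _ => Abar i 0 - b i) i 0) = b := by
        have he : (fun i => Abar i 0 - (fun i (_ : Fin 1) => Abar i 0 - b i) i 0)
            = fun i => b i := by
          funext i; simp
        rw [he]
        rfl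
      rwa [hb] at h2
    · intro h A
      have h2 := h (ι (fun i => Abar i 0 - A i 0))
      simp only [hterm0, hterm]
      exact h2
  rw [hL]
  have hf1 : (Finset.range T).filter (fun t => ι (d t) ≠ 0)
      = (Finset.range T).filter (fun t => d t ≠ 0) :=
    Finset.filter_congr (fun t _ => by simp [hι, WithLp.equiv_symm_apply])
  have hf2 : (Finset.range T).filter (fun t => ι (d t) = 0)
      = (Finset.range T).filter (fun t => d t = 0) :=
    Finset.filter_congr (fun t _ => by simp [hι, WithLp.equiv_symm_apply])
  have hsum : e2norm (∑ t ∈ (Finset.range T).filter (fun t => d t ≠ 0), f (x t) • dhat (d t))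
      = ‖∑ t ∈ (Finset.range T).filter (fun t => d t ≠ 0),
          f (x t) • (‖ι (d t)‖⁻¹ • ι (d t))‖ := by
    rw [e2norm_eq]
    congr 1
    simp only [dhat, e2norm_eq]
    simp [hι, WithLp.equiv_symm_apply, WithLp.toLp_sum, WithLp.toLp_smul]
  rw [hsum]
  convert key using 5
  · rfl
  · simp [hι, WithLp.equiv_symm_apply]
  · simp [hι, WithLp.equiv_symm_apply]
end
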